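/- Let x, y ∈ ℝ^c with 𝟙ᵀx = 𝟙ᵀy = 0 and let τ > 0. Then perfect state transfer occurs between x and y under M at time τ (i.e., U_M(τ)·x = γ·y for some γ ∈ ℂ with |γ| = 1) if and only if perfect state transfer occurs between (x,0) and (y,0) under N at time τ. In particular (taking y = x), x is periodic in M at time τ if and only if (x,0) is periodic in N at time τ. -/

import Mathlib

open Matrix

/-- The transition matrix `U_R(t) = exp(i·t·R)` of a real square matrix `R`,
as a complex matrix. -/
noncomputable def U {ι : Type*} [Fintype ι] [DecidableEq ι]
    (R : Matrix ι ι ℝ) (t : ℝ) : Matrix ι ι ℂ :=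
  NormedSpace.exp ((Complex.I * (t : ℂ)) • R.map (Complex.ofReal ·))

lemma exp_mulVec {ι : Type*} [Fintype ι] [DecidableEq ι] (A : Matrix ι ι ℂ) (v : ι → ℂ) :
    NormedSpace.exp A *ᵥ v = ∑' n : ℕ, ((n.factorial : ℂ)⁻¹ • (A ^ n *ᵥ v)) := by
  letI : SeminormedRing (Matrix ι ι ℂ) := Matrix.linftyOpSemiNormedRing
  letI : NormedRing (Matrix ι ι ℂ) := Matrix.linftyOpNormedRing
  letI : NormedAlgebra ℂ (Matrix ι ι ℂ) := Matrix.linftyOpNormedAlgebra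
  letI : CompleteSpace (Matrix ι ι ℂ) := FiniteDimensional.complete ℂ _
  let L : Matrix ι ι ℂ →ₗ[ℂ] (ι → ℂ) :=
    { toFun := fun W => W *ᵥ v
      map_add' := fun a b => Matrix.add_mulVec a b v
      map_smul' := fun c a => Matrix.smul_mulVec c a v }
  have h := (LinearMap.toContinuousLinearMap L).map_tsum
    (NormedSpace.expSeries_summable' (𝕂 := ℂ) A)
  rw [NormedSpace.exp_eq_tsum (𝕂 := ℂ)]
  simpa [L, Matrix.smul_mulVec] using h

lemma mulVec_summable {ι : Type*} [Fintype ι] [DecidableEq ι] (A : Matrix ι ι ℂ) (v : ι → ℂ) :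
    Summable fun n : ℕ => ((n.factorial : ℂ)⁻¹ • (A ^ n *ᵥ v)) := by
  letI : SeminormedRing (Matrix ι ι ℂ) := Matrix.linftyOpSemiNormedRing
  letI : NormedRing (Matrix ι ι ℂ) := Matrix.linftyOpNormedRing
  letI : NormedAlgebra ℂ (Matrix ι ι ℂ) := Matrix.linftyOpNormedAlgebra
  letI : CompleteSpace (Matrix ι ι ℂ) := FiniteDimensional.complete ℂ _
  let L : Matrix ι ι ℂ →ₗ[ℂ] (ι → ℂ) :=
    { toFun := fun W => W *ᵥ v
      map_add' := fun a b => Matrix.add_mulVec a b v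
      map_smul' := fun c a => Matrix.smul_mulVec c a v }
  have h := ((NormedSpace.expSeries_summable' (𝕂 := ℂ) A).map
    (LinearMap.toContinuousLinearMap L) (LinearMap.toContinuousLinearMap L).continuous)
  simpa [L, Function.comp_def, Matrix.smul_mulVec] using h

lemma exp_smul_one {ι : Type*} [Fintype ι] [DecidableEq ι] (s : ℂ) :
    NormedSpace.exp (s • (1 : Matrix ι ι ℂ)) = Complex.exp s • 1 := by
  letI : SeminormedRing (Matrix ι ι ℂ) := Matrix.linftyOpSemiNormedRing
  letI : NormedRing (Matrix ι ι ℂ) := Matrix.linftyOpNormedRing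
  letI : NormedAlgebra ℂ (Matrix ι ι ℂ) := Matrix.linftyOpNormedAlgebra
  letI : CompleteSpace (Matrix ι ι ℂ) := FiniteDimensional.complete ℂ _
  have h1 : s • (1 : Matrix ι ι ℂ) = algebraMap ℂ (Matrix ι ι ℂ) s :=
    (Algebra.algebraMap_eq_smul_one _).symm
  rw [h1]
  erw [← NormedSpace.algebraMap_exp_comm]
  rw [Algebra.algebraMap_eq_smul_one, ← Complex.exp_eq_exp_ℂ]

lemma elim_smul {c m : ℕ} (a : ℂ) (v : Fin c → ℂ) :
    Sum.elim (a • v) (0 : Fin m → ℂ) = a • Sum.elim v 0 := by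
  funext k; cases k <;> simp

/-- For `x, y ∈ ℝ^c` with `𝟙ᵀx = 𝟙ᵀy = 0` and `τ > 0`, perfect state
transfer occurs between `x` and `y` under `M` at time `τ` if and only if it occurs
between `(x,0)` and `(y,0)` under `N` at time `τ`. (In particular, taking `y = x`,
`x` is periodic in `M` at `τ` iff `(x,0)` is periodic in `N` at `τ`.) -/
theorem stmt2 (c m : ℕ) (hc : 1 ≤ c)
    (M : Matrix (Fin c) (Fin c) ℝ) (hM : M.IsSymm)
    (μ α : ℝ) (hμ : M *ᵥ (fun _ => (1 : ℝ)) = μ • fun _ => (1 : ℝ))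
    (w : Fin m → ℝ)
    (B : Matrix (Fin c) (Fin m) ℝ) (hB : ∀ i j, B i j = w j)
    (D : Matrix (Fin m) (Fin m) ℝ) (hD : D.IsSymm)
    (N : Matrix (Fin c ⊕ Fin m) (Fin c ⊕ Fin m) ℝ)
    (hN : N = Matrix.fromBlocks (α • (1 : Matrix (Fin c) (Fin c) ℝ) + M) B Bᵀ D)
    (x y : Fin c → ℝ) (hx : ∑ i, x i = 0) (hy : ∑ i, y i = 0)
    (τ : ℝ) (hτ : 0 < τ) :
    (∃ γ : ℂ, ‖γ‖ = 1 ∧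
        U M τ *ᵥ (fun i => (x i : ℂ)) = γ • fun i => (y i : ℂ)) ↔
      (∃ γ : ℂ, ‖γ‖ = 1 ∧
        U N τ *ᵥ Sum.elim (fun i => (x i : ℂ)) 0 =
          γ • Sum.elim (fun i => (y i : ℂ)) 0) := by
  classical
  set xc : Fin c → ℂ := fun i => (x i : ℂ) with hxc
  set yc : Fin c → ℂ := fun i => (y i : ℂ) with hyc
  set Mc : Matrix (Fin c) (Fin c) ℂ := M.map (Complex.ofReal ·) with hMc
  set Ac : Matrix (Fin c) (Fin c) ℂ :=
    (α • (1 : Matrix (Fin c) (Fin c) ℝ) + M).map (Complex.ofReal ·) with hAc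
  set Nc : Matrix (Fin c ⊕ Fin m) (Fin c ⊕ Fin m) ℂ := N.map (Complex.ofReal ·) with hNc
  -- column sums of Ac
  have colsum : ∀ j, ∑ i, Ac i j = (α : ℂ) + μ := by
    intro j
    have hrow : ∑ i, M j i = μ := by
      have := congrFun hμ j
      simpa [Matrix.mulVec, dotProduct] using this
    have hsym : ∀ i, M i j = M j i := fun i => by
      conv_lhs => rw [← hM]
      rfl
    have hre : ∑ i, (α • (1 : Matrix (Fin c) (Fin c) ℝ) + M) i j = α + μ := by
      simp only [Matrix.add_apply, Matrix.smul_apply, Matrix.one_apply, smul_eq_mul]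
      rw [Finset.sum_add_distrib]
      congr 1
      · simp [mul_ite, Finset.sum_ite_eq']
      · rw [Finset.sum_congr rfl fun i _ => hsym i, hrow]
    rw [hAc]
    simp only [Matrix.map_apply]
    rw [← Complex.ofReal_sum, hre]
    push_cast; ring
  -- sum preservation
  have sumzero : ∀ z : Fin c → ℂ, (∑ i, z i) = 0 → ∑ i, (Ac *ᵥ z) i = 0 := by
    intro z hz
    have : ∑ i, (Ac *ᵥ z) i = ∑ j, (∑ i, Ac i j) * z j := by
      simp only [Matrix.mulVec, dotProduct]
      rw [Finset.sum_comm]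
      exact Finset.sum_congr rfl fun j _ => by rw [Finset.sum_mul]
    rw [this]
    calc ∑ j, (∑ i, Ac i j) * z j = ((α : ℂ) + μ) * ∑ j, z j := by
          rw [Finset.mul_sum]; exact Finset.sum_congr rfl fun j _ => by rw [colsum]
      _ = 0 := by rw [hz, mul_zero]
  -- invariance step
  have step : ∀ z : Fin c → ℂ, (∑ i, z i) = 0 →
      Nc *ᵥ Sum.elim z 0 = Sum.elim (Ac *ᵥ z) 0 := by
    intro z hz
    funext k
    cases k with
    | inl i =>
        simp only [Matrix.mulVec, dotProduct, Fintype.sum_sum_type, Sum.elim_inl, Sum.elim_inr,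
          hNc, hN, Matrix.map_apply, Matrix.fromBlocks_apply₁₁, Matrix.fromBlocks_apply₁₂,
          Pi.zero_apply, mul_zero, Finset.sum_const_zero, add_zero]
        rfl
    | inr i =>
        simp only [Matrix.mulVec, dotProduct, Fintype.sum_sum_type, Sum.elim_inl, Sum.elim_inr,
          hNc, hN, Matrix.map_apply, Matrix.fromBlocks_apply₂₁, Matrix.fromBlocks_apply₂₂,
          Pi.zero_apply, mul_zero, Finset.sum_const_zero, add_zero, Matrix.transpose_apply]
        have hwz : ∀ j, (B j i : ℂ) * z j = (w i : ℂ) * z j := fun j => by rw [hB]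
        rw [Finset.sum_congr rfl fun j _ => hwz j, ← Finset.mul_sum, hz, mul_zero]
  have hxsum : ∑ i, xc i = 0 := by
    simp only [hxc, ← Complex.ofReal_sum, hx, Complex.ofReal_zero]
  -- powers
  have pow : ∀ n : ℕ, (∑ i, (Ac ^ n *ᵥ xc) i) = 0 ∧
      Nc ^ n *ᵥ Sum.elim xc 0 = Sum.elim (Ac ^ n *ᵥ xc) 0 := by
    intro n
    induction n with
    | zero => simpa using hxsum
    | succ n ih =>
        have h1 : Ac ^ (n + 1) *ᵥ xc = Ac *ᵥ (Ac ^ n *ᵥ xc) := by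
          rw [pow_succ', Matrix.mulVec_mulVec]
        have h2 : Nc ^ (n + 1) *ᵥ Sum.elim xc 0 = Nc *ᵥ (Nc ^ n *ᵥ Sum.elim xc 0) := by
          rw [pow_succ', Matrix.mulVec_mulVec]
        refine ⟨?_, ?_⟩
        · rw [h1]; exact sumzero _ ih.1
        · rw [h2, ih.2, step _ ih.1, h1]
  -- Sum.elim as a linear map
  let E : (Fin c → ℂ) →ₗ[ℂ] (Fin c ⊕ Fin m → ℂ) :=
    { toFun := fun v => Sum.elim v 0
      map_add' := fun a b => by funext k; cases k <;> simp
      map_smul' := fun r a => by funext k; cases k <;> simp }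
  -- key identity
  have key : U N τ *ᵥ Sum.elim xc 0 =
      Sum.elim (U (α • (1 : Matrix (Fin c) (Fin c) ℝ) + M) τ *ᵥ xc) 0 := by
    rw [U, U, exp_mulVec, exp_mulVec]
    have hE := (LinearMap.toContinuousLinearMap E).map_tsum
      (mulVec_summable ((Complex.I * (τ : ℂ)) • Ac) xc)
    simp only [LinearMap.coe_toContinuousLinearMap'] at hE
    calc ∑' n : ℕ, ((n.factorial : ℂ)⁻¹ •
            (((Complex.I * (τ : ℂ)) • Nc) ^ n *ᵥ Sum.elim xc 0))
        = ∑' n : ℕ, E ((n.factorial : ℂ)⁻¹ • (((Complex.I * (τ : ℂ)) • Ac) ^ n *ᵥ xc)) := by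
          refine tsum_congr fun n => ?_
          show ((n.factorial : ℂ)⁻¹ • (((Complex.I * (τ : ℂ)) • Nc) ^ n *ᵥ Sum.elim xc 0)) =
            Sum.elim ((n.factorial : ℂ)⁻¹ • (((Complex.I * (τ : ℂ)) • Ac) ^ n *ᵥ xc)) 0
          rw [smul_pow, smul_pow, Matrix.smul_mulVec, Matrix.smul_mulVec,
            (pow n).2, elim_smul, elim_smul]
      _ = E (∑' n : ℕ, ((n.factorial : ℂ)⁻¹ • (((Complex.I * (τ : ℂ)) • Ac) ^ n *ᵥ xc))) :=
          hE.symm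
      _ = _ := rfl
  -- split the exponential
  have hAdd : (Complex.I * (τ : ℂ)) • Ac =
      (Complex.I * τ * α) • (1 : Matrix (Fin c) (Fin c) ℂ) + (Complex.I * (τ : ℂ)) • Mc := by
    ext i j
    by_cases h : i = j <;>
      simp [hAc, hMc, Matrix.one_apply, h] <;> push_cast <;> ring
  have hcomm : Commute ((Complex.I * τ * α) • (1 : Matrix (Fin c) (Fin c) ℂ))
      ((Complex.I * (τ : ℂ)) • Mc) :=
    ((Commute.one_left _).smul_left _).smul_right _
  have split : U (α • (1 : Matrix (Fin c) (Fin c) ℝ) + M) τ =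
      Complex.exp (Complex.I * τ * α) • U M τ := by
    rw [U, U, ← hAc, ← hMc, hAdd, Matrix.exp_add_of_commute _ _ hcomm,
      exp_smul_one, smul_mul_assoc, one_mul]
  have key2 : U N τ *ᵥ Sum.elim xc 0 =
      Complex.exp (Complex.I * τ * α) • Sum.elim (U M τ *ᵥ xc) 0 := by
    rw [key, split, Matrix.smul_mulVec, elim_smul]
  have habs : ‖Complex.exp (Complex.I * τ * α)‖ = 1 := by
    simp [Complex.norm_exp, Complex.mul_re, Complex.mul_im]
  constructor
  · rintro ⟨γ, hγ, hU⟩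
    refine ⟨Complex.exp (Complex.I * τ * α) * γ, ?_, ?_⟩
    · rw [norm_mul, hγ, habs, mul_one]
    · rw [key2, hU, elim_smul, smul_smul]
  · rintro ⟨γ, hγ, hU⟩
    have e0 : Complex.exp (Complex.I * τ * α) ≠ 0 := Complex.exp_ne_zero _
    refine ⟨γ * (Complex.exp (Complex.I * τ * α))⁻¹, ?_, ?_⟩
    · rw [norm_mul, norm_inv, hγ, habs, inv_one, mul_one]
    · have h2 : Complex.exp (Complex.I * τ * α) • Sum.elim (U M τ *ᵥ xc) (0 : Fin m → ℂ) =
          γ • Sum.elim yc (0 : Fin m → ℂ) := by rw [← key2, hU]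
      funext i
      have h3 := congrFun h2 (Sum.inl i)
      simp only [Pi.smul_apply, Sum.elim_inl, smul_eq_mul] at h3
      have : (U M τ *ᵥ xc) i = γ * (Complex.exp (Complex.I * τ * α))⁻¹ * yc i := by
        field_simp
        linear_combination h3
      simpa using this
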